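/- For every real number $\alpha$ with $(\sqrt{7}-1)/2 \leq \alpha \leq (\sqrt{13}-1)/2$ and $\alpha \neq 1$, the function $f_\alpha$ is subadditive on $[0,1]$: for all real $x, y \geq 0$ with $x + y \leq 1$, $f_\alpha(x+y) \leq f_\alpha(x) + f_\alpha(y)$. -/

import Mathlib

set_option maxHeartbeats 2000000

open Real

/-- The function expressing the Rényi-α entanglement of a two-qubit state as a function of
its squared concurrence:
`f_α(x) = (1/(1-α)) * log₂ [ ((1-√(1-x))/2)^α + ((1+√(1-x))/2)^α ]`. -/
noncomputable def renyiF (α x : ℝ) : ℝ :=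
  (1 / (1 - α)) *
    Real.logb 2 (((1 - Real.sqrt (1 - x)) / 2) ^ α + ((1 + Real.sqrt (1 - x)) / 2) ^ α)

lemma nonpos_of_deriv_nonpos {f g : ℝ → ℝ} (hf : ∀ u : ℝ, HasDerivAt f (g u) u)
    (h0 : f 0 = 0) (hg : ∀ u : ℝ, 0 ≤ u → g u ≤ 0) :
    ∀ u : ℝ, 0 ≤ u → f u ≤ 0 := by
  intro u hu
  have hanti : AntitoneOn f (Set.Ici (0:ℝ)) := by
    apply antitoneOn_of_deriv_nonpos (convex_Ici 0)
    · exact fun x _ => (hf x).differentiableAt.continuousAt.continuousWithinAt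
    · exact fun x _ => (hf x).differentiableAt.differentiableWithinAt
    · intro x hx
      rw [(hf x).deriv]
      rw [interior_Ici] at hx
      exact hg x (le_of_lt hx)
  have := hanti (Set.self_mem_Ici) (Set.mem_Ici.2 hu) hu
  simpa [h0] using this

lemma psi_nonpos (r : ℝ) (hr2 : r^2 = 13) (hr0 : 0 ≤ r) :
    ∀ u : ℝ, 0 ≤ u →
      (1 - (r-1)/2) * Real.sinh (3*u) + 3 * Real.sinh ((r-2)*u) + Real.sinh ((4-r)*u)
        - (3 + (r-1)/2) * Real.sinh u ≤ 0 := by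
  have hr3 : r^3 = 13*r := by nlinarith [hr2]
  have hr4 : r^4 = 169 := by nlinarith [hr2]
  have hrlb : (6571:ℝ)/1825 ≤ r := by nlinarith [hr2, hr0]
  have hrub : r ≤ 4 := by nlinarith [hr2, hr0]
  set a : ℝ := (r-1)/2 with ha
  set b : ℝ := r - 2 with hb
  set c : ℝ := 4 - r with hc
  have hb0 : 0 ≤ b := by rw [hb]; nlinarith
  have hb3 : b ≤ 3 := by rw [hb]; nlinarith
  have hc0 : 0 ≤ c := by rw [hc]; nlinarith
  have hc3 : c ≤ 3 := by rw [hc]; nlinarith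
  have ha3 : 0 ≤ 3 + a := by rw [ha]; nlinarith
  -- derivative builders
  have d3 : ∀ (k : ℝ) (u : ℝ), HasDerivAt (fun u : ℝ => Real.sinh (k*u)) (k * Real.cosh (k*u)) u := by
    intro k u
    have := ((hasDerivAt_id u).const_mul k).sinh
    convert this using 1 <;> simp [id] <;> ring
  have d4 : ∀ (k : ℝ) (u : ℝ), HasDerivAt (fun u : ℝ => Real.cosh (k*u)) (k * Real.sinh (k*u)) u := by
    intro k u
    have := ((hasDerivAt_id u).const_mul k).cosh
    convert this using 1 <;> simp [id] <;> ring
  -- psi4 nonpos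
  have h4 : ∀ u : ℝ, 0 ≤ u →
      27*(1-a)*(3*Real.sinh (3*u)) + 3*b^3*(b*Real.sinh (b*u)) + c^3*(c*Real.sinh (c*u))
        - (3+a)*(1*Real.sinh u) ≤ 0 := by
    intro u hu
    have s3 : 0 ≤ Real.sinh (3*u) := by
      rw [← Real.sinh_zero]; exact Real.sinh_le_sinh.mpr (by linarith)
    have su : 0 ≤ Real.sinh u := by
      rw [← Real.sinh_zero]; exact Real.sinh_le_sinh.mpr hu
    have mb : Real.sinh (b*u) ≤ Real.sinh (3*u) :=
      Real.sinh_le_sinh.mpr (by nlinarith)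
    have mc : Real.sinh (c*u) ≤ Real.sinh (3*u) :=
      Real.sinh_le_sinh.mpr (by nlinarith)
    have coef : 81*(1-a) + 3*b^4 + c^4 ≤ 0 := by
      rw [ha, hb, hc]; nlinarith [hr2, hr3, hr4, hrlb]
    have e1 : 3*b^3*(b*Real.sinh (b*u)) ≤ 3*b^4*Real.sinh (3*u) := by nlinarith [mul_le_mul_of_nonneg_left mb (by positivity : (0:ℝ) ≤ 3*b^4)]
    have e2 : c^3*(c*Real.sinh (c*u)) ≤ c^4*Real.sinh (3*u) := by nlinarith [mul_le_mul_of_nonneg_left mc (by positivity : (0:ℝ) ≤ c^4)]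
    nlinarith [mul_le_mul_of_nonneg_right coef s3, mul_nonneg ha3 su]
  -- psi3
  have h3 : ∀ u : ℝ, 0 ≤ u →
      27*(1-a)*Real.cosh (3*u) + 3*b^3*Real.cosh (b*u) + c^3*Real.cosh (c*u)
        - (3+a)*Real.cosh u ≤ 0 := by
    apply nonpos_of_deriv_nonpos (g := fun u => 27*(1-a)*(3*Real.sinh (3*u)) + 3*b^3*(b*Real.sinh (b*u)) + c^3*(c*Real.sinh (c*u)) - (3+a)*(1*Real.sinh u))
    · intro u
      have t1 := ((d4 3 u).const_mul (27*(1-a)))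
      have t2 := ((d4 b u).const_mul (3*b^3))
      have t3 := ((d4 c u).const_mul (c^3))
      have t4 := ((d4 1 u).const_mul ((3+a)))
      have := ((t1.fun_add t2).fun_add t3).fun_sub t4
      convert! this using 1
      · funext x; simp [one_mul]
      · ring
    · simp only [mul_zero, Real.cosh_zero]
      rw [ha, hb, hc]; ring_nf
      linear_combination (2*r - 6) * hr2
    · exact h4
  -- psi2
  have h2 : ∀ u : ℝ, 0 ≤ u →
      9*(1-a)*Real.sinh (3*u) + 3*b^2*Real.sinh (b*u) + c^2*Real.sinh (c*u)
        - (3+a)*Real.sinh u ≤ 0 := by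
    apply nonpos_of_deriv_nonpos (g := fun u => 27*(1-a)*Real.cosh (3*u) + 3*b^3*Real.cosh (b*u) + c^3*Real.cosh (c*u) - (3+a)*Real.cosh u)
    · intro u
      have t1 := ((d3 3 u).const_mul (9*(1-a)))
      have t2 := ((d3 b u).const_mul (3*b^2))
      have t3 := ((d3 c u).const_mul (c^2))
      have t4 := ((d3 1 u).const_mul ((3+a)))
      have := ((t1.fun_add t2).fun_add t3).fun_sub t4
      convert! this using 1
      · funext x; simp [one_mul]
      · simp; ring
    · simp
    · exact h3
  -- psi1
  have h1 : ∀ u : ℝ, 0 ≤ u →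
      3*(1-a)*Real.cosh (3*u) + 3*b*Real.cosh (b*u) + c*Real.cosh (c*u)
        - (3+a)*Real.cosh u ≤ 0 := by
    apply nonpos_of_deriv_nonpos (g := fun u => 9*(1-a)*Real.sinh (3*u) + 3*b^2*Real.sinh (b*u) + c^2*Real.sinh (c*u) - (3+a)*Real.sinh u)
    · intro u
      have t1 := ((d4 3 u).const_mul (3*(1-a)))
      have t2 := ((d4 b u).const_mul (3*b))
      have t3 := ((d4 c u).const_mul c)
      have t4 := ((d4 1 u).const_mul ((3+a)))
      have := ((t1.fun_add t2).fun_add t3).fun_sub t4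
      convert! this using 1
      · funext x; simp [one_mul]
      · simp; ring
    · simp only [mul_zero, Real.cosh_zero]
      rw [ha, hb, hc]; ring
    · exact h2
  -- psi0
  apply nonpos_of_deriv_nonpos (g := fun u => 3*(1-a)*Real.cosh (3*u) + 3*b*Real.cosh (b*u) + c*Real.cosh (c*u) - (3+a)*Real.cosh u)
  · intro u
    have t1 := ((d3 3 u).const_mul ((1-a)))
    have t2 := ((d3 b u).const_mul (3:ℝ))
    have t3 := (d3 c u)
    have t4 := ((d3 1 u).const_mul ((3+a)))
    have := ((t1.fun_add t2).fun_add t3).fun_sub t4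
    convert! this using 1
    · funext x; simp [one_mul]
    · simp; ring
  · simp
  · exact h1


noncomputable def Fdef (s p : ℝ) : ℝ :=
  (3*s-1)*s^p + (s-3)*s^(2-p) + (s-1)^3 - p*(s-1)*(s+1)^2

lemma Fdef_alpha1_nonpos (r : ℝ) (hr2 : r^2 = 13) (hr0 : 0 ≤ r)
    (s : ℝ) (hs : 1 ≤ s) : Fdef s ((r-1)/2) ≤ 0 := by
  have hs0 : (0:ℝ) < s := lt_of_lt_of_le one_pos hs
  set u : ℝ := Real.log s / 2 with hu_def
  have hu : 0 ≤ u := by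
    have := Real.log_nonneg hs
    rw [hu_def]; linarith
  set X : ℝ := Real.exp u with hX_def
  set P : ℝ := Real.exp ((r-2)*u) with hP_def
  set Q : ℝ := Real.exp ((4-r)*u) with hQ_def
  have hX : 0 < X := Real.exp_pos u
  have hP : 0 < P := Real.exp_pos _
  have hQ : 0 < Q := Real.exp_pos _
  have hXs : X^2 = s := by
    rw [hX_def, sq, ← Real.exp_add]
    rw [show u + u = Real.log s by rw [hu_def]; ring]
    exact Real.exp_log hs0
  have hPQ : P * Q = X^2 := by
    rw [hP_def, hQ_def, hX_def, sq, ← Real.exp_add, ← Real.exp_add]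
    congr 1; ring
  have hsp : s ^ ((r-1)/2 : ℝ) = P * X := by
    rw [Real.rpow_def_of_pos hs0, hP_def, hX_def, ← Real.exp_add]
    congr 1
    rw [show Real.log s = 2*u by rw [hu_def]; ring]
    ring
  have hsq : s ^ (2 - (r-1)/2 : ℝ) = Q * X := by
    rw [Real.rpow_def_of_pos hs0, hQ_def, hX_def, ← Real.exp_add]
    congr 1
    rw [show Real.log s = 2*u by rw [hu_def]; ring]
    ring
  have e3 : Real.exp (3*u) = X^3 := by
    rw [hX_def, show (3:ℝ)*u = u+u+u by ring, Real.exp_add, Real.exp_add]; ring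
  have hiP : P⁻¹ = Q / X^2 := by
    rw [← hPQ]; field_simp
  have hiQ : Q⁻¹ = P / X^2 := by
    rw [← hPQ]; field_simp [mul_comm]
  have key := psi_nonpos r hr2 hr0 u hu
  have bridge : Fdef s ((r-1)/2) =
      2 * X^3 * ((1 - (r-1)/2) * Real.sinh (3*u) + 3 * Real.sinh ((r-2)*u)
        + Real.sinh ((4-r)*u) - (3 + (r-1)/2) * Real.sinh u) := by
    rw [Fdef, hsp, hsq, ← hXs]
    rw [Real.sinh_eq, Real.sinh_eq, Real.sinh_eq, Real.sinh_eq]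
    rw [Real.exp_neg, Real.exp_neg, Real.exp_neg, Real.exp_neg, e3]
    rw [← hP_def, ← hQ_def, ← hX_def, hiP, hiQ]
    field_simp
    ring
  rw [bridge]
  have hX3 : (0:ℝ) ≤ 2 * X^3 := by positivity
  exact mul_nonpos_of_nonneg_of_nonpos hX3 key


lemma Fdef_one (s : ℝ) : Fdef s 1 = 0 := by
  rw [Fdef, Real.rpow_one, show (2:ℝ)-1 = 1 by norm_num, Real.rpow_one]; ring

lemma H_nonneg (s p : ℝ) (hs : 1 ≤ s) (hp : 1/2 ≤ p) :
    0 ≤ (3*s-1)*s^p + (s-3)*s^(2-p) := by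
  have hs0 : (0:ℝ) < s := lt_of_lt_of_le one_pos hs
  have hsp : (0:ℝ) ≤ s^p := Real.rpow_nonneg hs0.le p
  rcases le_or_gt 3 s with h3 | h3
  · have := Real.rpow_nonneg hs0.le (2-p)
    nlinarith
  · rcases le_or_gt p 1 with hp1 | hp1
    · have key : s^(2-p) ≤ s * s^p := by
        have e : s^(2-p) = s^(2-2*p) * s^p := by
          rw [← Real.rpow_add hs0]; ring_nf
        rw [e]
        have h1 : s^(2-2*p) ≤ s^(1:ℝ) :=
          Real.rpow_le_rpow_of_exponent_le hs (by linarith)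
        rw [Real.rpow_one] at h1
        exact mul_le_mul_of_nonneg_right h1 hsp
      have h2 : (s-3)*(s*s^p) ≤ (s-3)*s^(2-p) :=
        mul_le_mul_of_nonpos_left key (by linarith)
      nlinarith [mul_nonneg (by nlinarith : (0:ℝ) ≤ s^2 - 1) hsp]
    · have key : s^(2-p) ≤ s^p :=
        Real.rpow_le_rpow_of_exponent_le hs (by linarith)
      have h2 : (s-3)*s^p ≤ (s-3)*s^(2-p) :=
        mul_le_mul_of_nonpos_left key (by linarith)
      nlinarith [mul_nonneg (by linarith : (0:ℝ) ≤ 4*s - 4) hsp]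

lemma Fdef_convexOn (s : ℝ) (hs : 1 ≤ s) (t : ℝ) :
    ConvexOn ℝ (Set.Icc (1/2 : ℝ) t) (fun p => Fdef s p) := by
  have hs0 : (0:ℝ) < s := lt_of_lt_of_le one_pos hs
  have h1 : ∀ p : ℝ, HasDerivAt (fun p : ℝ => s^p) (s^p * Real.log s) p :=
    fun p => (Real.hasStrictDerivAt_const_rpow hs0 p).hasDerivAt
  have h2 : ∀ p : ℝ, HasDerivAt (fun p : ℝ => s^(2-p)) (-(s^(2-p) * Real.log s)) p := by
    intro p
    have inner : HasDerivAt (fun p : ℝ => 2 - p) (-1) p := by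
      simpa using (hasDerivAt_const p (2:ℝ)).fun_sub (hasDerivAt_id p)
    have := ((Real.hasStrictDerivAt_const_rpow hs0 (2-p)).hasDerivAt).comp p inner
    convert! this using 1; ring
  have hd1 : ∀ p : ℝ, HasDerivAt (fun p => Fdef s p)
      ((3*s-1)*(s^p * Real.log s) - (s-3)*(s^(2-p) * Real.log s) - (s-1)*(s+1)^2) p := by
    intro p
    have h3 : HasDerivAt (fun p : ℝ => p*(s-1)*(s+1)^2) ((s-1)*(s+1)^2) p := by
      have := (hasDerivAt_id p).mul_const ((s-1)*(s+1)^2)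
      convert! this using 1
      · funext x; simp only [id_eq]; ring
      · simp only [one_mul]
    have := ((((h1 p).const_mul (3*s-1)).fun_add ((h2 p).const_mul (s-3))).fun_add
      (hasDerivAt_const p ((s-1)^3))).fun_sub h3
    convert! this using 1
    ring
  have hd2 : ∀ p : ℝ, HasDerivAt
      (fun p => (3*s-1)*(s^p * Real.log s) - (s-3)*(s^(2-p) * Real.log s) - (s-1)*(s+1)^2)
      (((3*s-1)*s^p + (s-3)*s^(2-p)) * (Real.log s)^2) p := by
    intro p
    have := ((((h1 p).mul_const (Real.log s)).const_mul (3*s-1)).fun_sub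
      (((h2 p).mul_const (Real.log s)).const_mul (s-3))).fun_sub (hasDerivAt_const p ((s-1)*(s+1)^2))
    convert! this using 1
    ring
  apply convexOn_of_hasDerivWithinAt2_nonneg (convex_Icc _ _)
    (f' := fun p => (3*s-1)*(s^p * Real.log s) - (s-3)*(s^(2-p) * Real.log s) - (s-1)*(s+1)^2)
    (f'' := fun p => ((3*s-1)*s^p + (s-3)*s^(2-p)) * (Real.log s)^2)
  · exact fun p _ => (hd1 p).differentiableAt.continuousAt.continuousWithinAt
  · exact fun p _ => (hd1 p).hasDerivWithinAt
  · exact fun p _ => (hd2 p).hasDerivWithinAt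
  · intro p hp
    rw [interior_Icc] at hp
    exact mul_nonneg (H_nonneg s p hs (le_of_lt hp.1)) (sq_nonneg _)

lemma Fdef_sign (s : ℝ) (hs : 1 ≤ s) (p : ℝ) (hp1 : 1/2 ≤ p)
    (hp2 : p ≤ (Real.sqrt 13 - 1)/2) : 0 ≤ (1-p) * Fdef s p := by
  set t : ℝ := (Real.sqrt 13 - 1)/2 with ht_def
  have hr2 : (Real.sqrt 13)^2 = 13 := Real.sq_sqrt (by norm_num)
  have hr0 : 0 ≤ Real.sqrt 13 := Real.sqrt_nonneg _
  have ht1 : 1 < t := by rw [ht_def]; nlinarith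
  have hFt : Fdef s t ≤ 0 := Fdef_alpha1_nonpos _ hr2 hr0 s hs
  have hF1 : Fdef s 1 = 0 := Fdef_one s
  have cv := Fdef_convexOn s hs t
  have hpmem : p ∈ Set.Icc (1/2 : ℝ) t := ⟨hp1, hp2⟩
  have htmem : t ∈ Set.Icc (1/2 : ℝ) t := ⟨by linarith, le_refl t⟩
  have h1mem : (1:ℝ) ∈ Set.Icc (1/2 : ℝ) t := ⟨by norm_num, ht1.le⟩
  rcases le_or_gt p 1 with hple | hpgt
  · rcases eq_or_lt_of_le hple with heq | hlt
    · rw [heq]; simp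
    · have hden : (0:ℝ) < t - p := by linarith
      have hl0 : (0:ℝ) ≤ (t-1)/(t-p) := by
        apply div_nonneg <;> linarith
      have hm0 : (0:ℝ) ≤ (1-p)/(t-p) := by
        apply div_nonneg <;> linarith
      have hsum : (t-1)/(t-p) + (1-p)/(t-p) = 1 := by
        field_simp; ring
      have hcomb := cv.2 hpmem htmem hl0 hm0 hsum
      simp only [smul_eq_mul] at hcomb
      have hpt : (t-1)/(t-p) * p + (1-p)/(t-p) * t = 1 := by
        field_simp; ring
      rw [hpt, hF1] at hcomb
      have hmt : ((1-p)/(t-p)) * Fdef s t ≤ 0 :=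
        mul_nonpos_of_nonneg_of_nonpos hm0 hFt
      have hl : (0:ℝ) < (t-1)/(t-p) := div_pos (by linarith) hden
      have hFp : 0 ≤ Fdef s p := by
        by_contra hneg
        push_neg at hneg
        nlinarith
      exact mul_nonneg (by linarith) hFp
  · have hden : (0:ℝ) < t - 1 := by linarith
    have hl0 : (0:ℝ) ≤ (t-p)/(t-1) := by
      apply div_nonneg <;> linarith
    have hm0 : (0:ℝ) ≤ (p-1)/(t-1) := by
      apply div_nonneg <;> linarith
    have hsum : (t-p)/(t-1) + (p-1)/(t-1) = 1 := by
      field_simp; ring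
    have hcomb := cv.2 h1mem htmem hl0 hm0 hsum
    simp only [smul_eq_mul] at hcomb
    have hpt : (t-p)/(t-1) * 1 + (p-1)/(t-1) * t = p := by
      field_simp; ring
    rw [hpt, hF1, mul_zero] at hcomb
    have hmt : ((p-1)/(t-1)) * Fdef s t ≤ 0 :=
      mul_nonpos_of_nonneg_of_nonpos hm0 hFt
    have hFp : Fdef s p ≤ 0 := by linarith
    nlinarith


lemma E_sign (p : ℝ) (hp1 : 1/2 ≤ p) (hp2 : p ≤ (Real.sqrt 13 - 1)/2)
    (u v : ℝ) (hu : 0 < u) (huv : u < v) (hsum : u + v = 1) :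
    (1-p) * ((v-u)*(p-1)*(u^(p-2)+v^(p-2))*(u^p+v^p)
      + 2*(u^(p-1)-v^(p-1))*(u^p+v^p) - p*(v-u)*(u^(p-1)-v^(p-1))^2) ≤ 0 := by
  have hv : 0 < v := lt_trans hu huv
  set s : ℝ := v / u with hs_def
  have hs0 : 0 < s := div_pos hv hu
  have hs : 1 < s := (one_lt_div hu).mpr huv
  have hveq : v = u * s := by rw [hs_def]; field_simp
  have key := Fdef_sign s hs.le p hp1 hp2
  have hA : 0 < u^p := Real.rpow_pos_of_pos hu p
  have hS : 0 < s^p := Real.rpow_pos_of_pos hs0 p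
  -- rewrite all powers
  have hvp : v^p = u^p * s^p := by rw [hveq, Real.mul_rpow hu.le hs0.le]
  have hvp1 : v^(p-1) = u^(p-1) * s^(p-1) := by rw [hveq, Real.mul_rpow hu.le hs0.le]
  have hvp2 : v^(p-2) = u^(p-2) * s^(p-2) := by rw [hveq, Real.mul_rpow hu.le hs0.le]
  have hup1 : u^(p-1) = u^p / u := Real.rpow_sub_one (ne_of_gt hu) p
  have hsp1 : s^(p-1) = s^p / s := Real.rpow_sub_one (ne_of_gt hs0) p
  have hup2 : u^(p-2) = u^p / u^2 := by
    rw [Real.rpow_sub hu, Real.rpow_two]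
  have hsp2 : s^(p-2) = s^p / s^2 := by
    rw [Real.rpow_sub hs0, Real.rpow_two]
  have hs2p : s^(2-p) = s^2 / s^p := by
    rw [Real.rpow_sub hs0, Real.rpow_two]
  have ident : (v-u)*(p-1)*(u^(p-2)+v^(p-2))*(u^p+v^p)
      + 2*(u^(p-1)-v^(p-1))*(u^p+v^p) - p*(v-u)*(u^(p-1)-v^(p-1))^2
      = -((u^p)^2 * s^p / (u * s^2)) * Fdef s p := by
    rw [Fdef, hvp, hvp1, hvp2, hup1, hsp1, hup2, hsp2, hs2p, hveq]
    field_simp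
    ring
  rw [ident]
  have hC : 0 < (u^p)^2 * s^p / (u * s^2) := by positivity
  nlinarith [mul_nonneg hC.le key]


lemma renyiF_concaveOn (α : ℝ) (hαl : 1/2 ≤ α) (hαu : α ≤ (Real.sqrt 13 - 1)/2)
    (hne : α ≠ 1) : ConcaveOn ℝ (Set.Icc (0:ℝ) 1) (renyiF α) := by
  have hα0 : (0:ℝ) < α := by linarith
  have hlog2 : (0:ℝ) < Real.log 2 := Real.log_pos (by norm_num)
  have h1α : (1:ℝ) - α ≠ 0 := sub_ne_zero.mpr (Ne.symm hne)
  set u : ℝ → ℝ := fun x => (1 - Real.sqrt (1-x))/2 with hu_def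
  set v : ℝ → ℝ := fun x => (1 + Real.sqrt (1-x))/2 with hv_def
  set g : ℝ → ℝ := fun x => u x ^ α + v x ^ α with hg_def
  have hfeq : renyiF α = fun y => (1/(1-α)) * (Real.log (g y) / Real.log 2) := by
    funext y
    rw [renyiF, Real.logb]
  set K : ℝ := 1/((1-α) * Real.log 2) with hK_def
  set f1 : ℝ → ℝ := fun x => K * ((α/4) * ((u x ^ (α-1) - v x ^ (α-1)) / (Real.sqrt (1-x) * g x))) with hf1_def
  set f2 : ℝ → ℝ := fun x => K * ((α/16) *
      ((Real.sqrt (1-x)*(α-1)*(u x^(α-2)+v x^(α-2))*(u x^α+v x^α)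
        + 2*(u x^(α-1)-v x^(α-1))*(u x^α+v x^α)
        - α*Real.sqrt (1-x)*(u x^(α-1)-v x^(α-1))^2)
        / ((Real.sqrt (1-x))^3 * (g x)^2))) with hf2_def
  -- basic facts on the interior
  have interior_facts : ∀ x ∈ Set.Ioo (0:ℝ) 1,
      0 < Real.sqrt (1-x) ∧ Real.sqrt (1-x) < 1 ∧ 0 < u x ∧ u x < v x ∧ u x + v x = 1 ∧ 0 < g x := by
    intro x hx
    have h1x : 0 < 1 - x := by linarith [hx.2]
    have ht0 : 0 < Real.sqrt (1-x) := Real.sqrt_pos.mpr h1x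
    have hsq : Real.sqrt (1-x) ^ 2 = 1 - x := Real.sq_sqrt h1x.le
    have ht1 : Real.sqrt (1-x) < 1 := by nlinarith [hx.1, Real.sqrt_nonneg (1-x)]
    have hu0 : 0 < u x := by rw [hu_def]; dsimp; linarith
    have huv : u x < v x := by rw [hu_def, hv_def]; dsimp; linarith
    have hsum : u x + v x = 1 := by rw [hu_def, hv_def]; dsimp; ring
    have hg0 : 0 < g x := by
      rw [hg_def]; dsimp
      have h1 : 0 < u x ^ α := Real.rpow_pos_of_pos hu0 α
      have h2 : 0 < v x ^ α := Real.rpow_pos_of_pos (lt_trans hu0 huv) α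
      exact add_pos h1 h2
    exact ⟨ht0, ht1, hu0, huv, hsum, hg0⟩
  -- derivative constructions
  have hderiv1 : ∀ x ∈ Set.Ioo (0:ℝ) 1,
      HasDerivAt (fun y => (1/(1-α)) * (Real.log (g y) / Real.log 2)) (f1 x) x := by
    intro x hx
    obtain ⟨ht0, ht1, hu0, huv, hsum, hg0⟩ := interior_facts x hx
    have h1x : 0 < 1 - x := by linarith [hx.2]
    have hsqrt : HasDerivAt (fun y : ℝ => Real.sqrt (1-y)) (-(1/(2*Real.sqrt (1-x)))) x := by
      have inner : HasDerivAt (fun y : ℝ => 1 - y) (-1) x := by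
        simpa using (hasDerivAt_const x (1:ℝ)).fun_sub (hasDerivAt_id x)
      have := inner.sqrt (ne_of_gt h1x)
      convert this using 1
      field_simp
    have hud : HasDerivAt u (1/(4*Real.sqrt (1-x))) x := by
      rw [hu_def]
      have := (hsqrt.const_sub 1).div_const 2
      convert! this using 1
      field_simp; ring
    have hvd : HasDerivAt v (-(1/(4*Real.sqrt (1-x)))) x := by
      rw [hv_def]
      have := (hsqrt.const_add 1).div_const 2
      convert! this using 1
      field_simp; ring
    have hgd : HasDerivAt g ((α/4) * ((u x ^ (α-1) - v x ^ (α-1)) / Real.sqrt (1-x))) x := by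
      rw [hg_def]
      have hA := hud.rpow_const (p := α) (Or.inl (ne_of_gt hu0))
      have hB := hvd.rpow_const (p := α) (Or.inl (ne_of_gt (lt_trans hu0 huv)))
      have := hA.fun_add hB
      convert! this using 1
      field_simp
      try ring
      try exact Or.inl (by ring)
      try exact Or.inl trivial
      try simp
    have hlg : HasDerivAt (fun y => Real.log (g y)) ((α/4) * ((u x ^ (α-1) - v x ^ (α-1)) / Real.sqrt (1-x)) / g x) x := by
      have := (Real.hasDerivAt_log (ne_of_gt hg0)).comp x hgd
      convert! this using 1
      field_simp
      try ring
      try exact Or.inl (by ring)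
      try exact Or.inl trivial
      try simp
    have := (hlg.div_const (Real.log 2)).const_mul (1/(1-α))
    convert! this using 1
    rw [hf1_def, hK_def]
    dsimp
    field_simp
    try ring
    try exact Or.inl (by ring)
    try exact Or.inl trivial
  have hderiv2 : ∀ x ∈ Set.Ioo (0:ℝ) 1, HasDerivAt f1 (f2 x) x ∧ f2 x ≤ 0 := by
    intro x hx
    obtain ⟨ht0, ht1, hu0, huv, hsum, hg0⟩ := interior_facts x hx
    have hv0 : 0 < v x := lt_trans hu0 huv
    have h1x : 0 < 1 - x := by linarith [hx.2]
    have hsqrt : HasDerivAt (fun y : ℝ => Real.sqrt (1-y)) (-(1/(2*Real.sqrt (1-x)))) x := by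
      have inner : HasDerivAt (fun y : ℝ => 1 - y) (-1) x := by
        simpa using (hasDerivAt_const x (1:ℝ)).fun_sub (hasDerivAt_id x)
      have := inner.sqrt (ne_of_gt h1x)
      convert this using 1
      field_simp
    have hud : HasDerivAt u (1/(4*Real.sqrt (1-x))) x := by
      rw [hu_def]
      have := (hsqrt.const_sub 1).div_const 2
      convert! this using 1
      field_simp; ring
    have hvd : HasDerivAt v (-(1/(4*Real.sqrt (1-x)))) x := by
      rw [hv_def]
      have := (hsqrt.const_add 1).div_const 2
      convert! this using 1
      field_simp; ring
    have hgd : HasDerivAt g ((α/4) * ((u x ^ (α-1) - v x ^ (α-1)) / Real.sqrt (1-x))) x := by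
      rw [hg_def]
      have hA := hud.rpow_const (p := α) (Or.inl (ne_of_gt hu0))
      have hB := hvd.rpow_const (p := α) (Or.inl (ne_of_gt hv0))
      have := hA.fun_add hB
      convert! this using 1
      field_simp
      try ring
      try exact Or.inl (by ring)
      try exact Or.inl trivial
      try simp
    -- numerator N = u^(α-1) - v^(α-1)
    have hUd := hud.rpow_const (p := α-1) (Or.inl (ne_of_gt hu0))
    have hVd := hvd.rpow_const (p := α-1) (Or.inl (ne_of_gt hv0))
    have hN : HasDerivAt (fun y => u y ^ (α-1) - v y ^ (α-1))
        ((α-1) * (u x ^ (α-2) + v x ^ (α-2)) * (1/(4*Real.sqrt (1-x)))) x := by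
      have := hUd.fun_sub hVd
      convert! this using 1
      rw [show α - 1 - 1 = α - 2 by ring]
      field_simp
      ring
    -- denominator D = sqrt(1-x) * g x
    have hD : HasDerivAt (fun y => Real.sqrt (1-y) * g y)
        (-(1/(2*Real.sqrt (1-x))) * g x
          + Real.sqrt (1-x) * ((α/4) * ((u x ^ (α-1) - v x ^ (α-1)) / Real.sqrt (1-x)))) x :=
      hsqrt.mul hgd
    have hDne : Real.sqrt (1-x) * g x ≠ 0 := ne_of_gt (mul_pos ht0 hg0)
    have hQ := hN.fun_div hD hDne
    have hf1d : HasDerivAt f1 (f2 x) x := by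
      rw [hf1_def]
      have := (hQ.const_mul (α/4)).const_mul K
      convert! this using 1
      rw [hf2_def, hg_def]
      dsimp
      rw [hu_def, hv_def]
      dsimp
      field_simp
      ring
    refine ⟨hf1d, ?_⟩
    -- sign of f2
    have hvu : v x - u x = Real.sqrt (1-x) := by rw [hu_def, hv_def]; dsimp; ring
    have hkey' : (1-α) * (Real.sqrt (1-x)*(α-1)*(u x^(α-2)+v x^(α-2))*(u x^α+v x^α)
        + 2*(u x^(α-1)-v x^(α-1))*(u x^α+v x^α)
        - α*Real.sqrt (1-x)*(u x^(α-1)-v x^(α-1))^2) ≤ 0 := by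
      rw [← hvu]
      exact E_sign α hαl hαu (u x) (v x) hu0 huv hsum
    set E : ℝ := Real.sqrt (1-x)*(α-1)*(u x^(α-2)+v x^(α-2))*(u x^α+v x^α)
        + 2*(u x^(α-1)-v x^(α-1))*(u x^α+v x^α)
        - α*Real.sqrt (1-x)*(u x^(α-1)-v x^(α-1))^2 with hE_def
    have hEdiv : E / (1-α) ≤ 0 := by
      have hid : E / (1-α) = ((1-α) * E) / (1-α)^2 := by
        field_simp
        try ring
        try exact Or.inl (by ring)
        try exact Or.inl trivial
      rw [hid]
      apply div_nonpos_of_nonpos_of_nonneg hkey' (sq_nonneg _)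
    have hrw : f2 x = (α/(16*(Real.sqrt (1-x))^3*(g x)^2*Real.log 2)) * (E / (1-α)) := by
      rw [hf2_def, hK_def, hE_def]
      dsimp
      field_simp
      try ring
      try exact Or.inl (by ring)
      try exact Or.inl trivial
    rw [hrw]
    apply mul_nonpos_of_nonneg_of_nonpos _ hEdiv
    positivity
  -- continuity
  have hgc : Continuous g := by
    rw [hg_def, hu_def, hv_def]
    have hsq : Continuous fun x : ℝ => Real.sqrt (1-x) :=
      (continuous_const.sub continuous_id).sqrt
    exact (((continuous_const.sub hsq).div_const 2).rpow_const
        (fun x => Or.inr hα0.le)).add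
      (((continuous_const.add hsq).div_const 2).rpow_const (fun x => Or.inr hα0.le))
  have hgpos : ∀ x ∈ Set.Icc (0:ℝ) 1, 0 < g x := by
    intro x hx
    have hs1 : Real.sqrt (1-x) ≤ 1 := by
      have := Real.sqrt_le_sqrt (by linarith [hx.1] : 1 - x ≤ 1)
      rwa [Real.sqrt_one] at this
    have hv0 : 0 < v x := by rw [hv_def]; dsimp; nlinarith [Real.sqrt_nonneg (1-x)]
    have hu0 : 0 ≤ u x := by rw [hu_def]; dsimp; linarith
    have h1 : 0 ≤ u x ^ α := Real.rpow_nonneg hu0 α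
    have h2 : 0 < v x ^ α := Real.rpow_pos_of_pos hv0 α
    rw [hg_def]; dsimp; linarith
  have hcont : ContinuousOn (fun y => (1/(1-α)) * (Real.log (g y) / Real.log 2)) (Set.Icc (0:ℝ) 1) :=
    continuousOn_const.mul
      ((hgc.continuousOn.log (fun x hx => ne_of_gt (hgpos x hx))).div_const (Real.log 2))
  rw [hfeq]
  apply concaveOn_of_hasDerivWithinAt2_nonpos (convex_Icc _ _) hcont
    (f' := f1) (f'' := f2)
  · intro x hx
    rw [interior_Icc] at hx
    exact (hderiv1 x hx).hasDerivWithinAt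
  · intro x hx
    rw [interior_Icc] at hx
    exact ((hderiv2 x hx).1).hasDerivWithinAt
  · intro x hx
    rw [interior_Icc] at hx
    exact (hderiv2 x hx).2


lemma renyiF_zero (α : ℝ) (hα : α ≠ 0) : renyiF α 0 = 0 := by
  rw [renyiF]
  norm_num [Real.zero_rpow hα, Real.one_rpow]

/-- For `(√7-1)/2 ≤ α ≤ (√13-1)/2`, `α ≠ 1`, the function `f_α` is subadditive on `[0,1]`:
for `x, y ≥ 0` with `x + y ≤ 1`, `f_α(x+y) ≤ f_α(x) + f_α(y)`. -/
theorem renyiF_subadditive (α : ℝ) (hα1 : (Real.sqrt 7 - 1) / 2 ≤ α)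
    (hα2 : α ≤ (Real.sqrt 13 - 1) / 2) (hα : α ≠ 1) :
    ∀ x y : ℝ, 0 ≤ x → 0 ≤ y → x + y ≤ 1 →
      renyiF α (x + y) ≤ renyiF α x + renyiF α y := by
  have h7 : (2:ℝ) ≤ Real.sqrt 7 := by
    nlinarith [Real.sq_sqrt (show (0:ℝ) ≤ 7 by norm_num), Real.sqrt_nonneg 7]
  have hαl : 1/2 ≤ α := by linarith
  have hcc := renyiF_concaveOn α hαl hα2 hα
  have hα0 : α ≠ 0 := ne_of_gt (by linarith : (0:ℝ) < α)
  have hzero := renyiF_zero α hα0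
  intro x y hx hy hxy
  rcases eq_or_lt_of_le (by linarith : (0:ℝ) ≤ x + y) with h0 | h0
  · have hx0 : x = 0 := by linarith
    have hy0 : y = 0 := by linarith
    rw [hx0, hy0]
    norm_num [hzero]
  · have hzne : x + y ≠ 0 := ne_of_gt h0
    have hzmem : x + y ∈ Set.Icc (0:ℝ) 1 := ⟨h0.le, hxy⟩
    have h0mem : (0:ℝ) ∈ Set.Icc (0:ℝ) 1 := by constructor <;> norm_num
    have ha : 0 ≤ x / (x+y) := div_nonneg hx h0.le
    have hb : 0 ≤ y / (x+y) := div_nonneg hy h0.le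
    have hab : x/(x+y) + y/(x+y) = 1 := by field_simp
    have hab' : y/(x+y) + x/(x+y) = 1 := by linarith
    have hfx := hcc.2 hzmem h0mem ha hb hab
    have hfy := hcc.2 hzmem h0mem hb ha hab'
    simp only [smul_eq_mul, mul_zero, add_zero] at hfx hfy
    rw [show x/(x+y)*(x+y) = x from by field_simp] at hfx
    rw [show y/(x+y)*(x+y) = y from by field_simp] at hfy
    rw [hzero, mul_zero, add_zero] at hfx hfy
    have key : renyiF α (x+y) = x/(x+y) * renyiF α (x+y) + y/(x+y) * renyiF α (x+y) := by
      rw [← add_mul, hab, one_mul]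
    linarith [hfx, hfy]
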